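/- For 1<q<p and every t ∈ [0,1), one has q ω_p(t)^{q−1} − (q−1) ω_p(t)^q > t^{(q−1)/(p−1)}, i.e., H_q(ω_p(t)) > t^{(q−1)/(p−1)}. -/

import Mathlib

open Real Set

/-- For `1 < q < p` and every `t ∈ [0,1)`,
`q ω_p(t)^(q-1) - (q-1) ω_p(t)^q > t^((q-1)/(p-1))`, i.e. `H_q(ω_p(t)) > t^((q-1)/(p-1))`. -/
theorem Hq_omega_p_gt (p q : ℝ) (hq : 1 < q) (hpq : q < p)
    (ωp : ℝ → ℝ)
    (hωp : ∀ s ∈ Icc (0 : ℝ) 1, ωp s ∈ Icc 1 (p / (p - 1)) ∧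
      p * ωp s ^ (p - 1) - (p - 1) * ωp s ^ p = s) :
    ∀ t ∈ Ico (0 : ℝ) 1,
      q * ωp t ^ (q - 1) - (q - 1) * ωp t ^ q > t ^ ((q - 1) / (p - 1)) := by
  intro t ht
  have hp1 : 1 < p := hq.trans hpq
  have hp0 : (0:ℝ) < p - 1 := by linarith
  have hq0 : (0:ℝ) < q - 1 := by linarith
  obtain ⟨ht0, ht1⟩ := ht
  obtain ⟨⟨hz1, hz2⟩, heq⟩ := hωp t ⟨ht0, ht1.le⟩
  set z := ωp t with hzdef
  -- z > 1
  have hzgt : 1 < z := by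
    rcases lt_or_eq_of_le hz1 with h | h
    · exact h
    · exfalso
      rw [← h, Real.one_rpow, Real.one_rpow] at heq
      simp at heq
      linarith
  have hzpos : (0:ℝ) < z := by linarith
  set x := z - 1 with hxdef
  have hx0 : 0 < x := by simp [hxdef]; linarith
  have hx1 : (p - 1) * x ≤ 1 := by
    have h2 : z * (p - 1) ≤ p := (le_div_iff₀ hp0).mp hz2
    simp only [hxdef]; nlinarith
  have hxq : (q - 1) * x < 1 := by nlinarith
  -- rewrite t
  have hzp : z ^ p = z ^ (p - 1) * z := by
    rw [← Real.rpow_add_one (ne_of_gt hzpos)]; congr 1; ring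
  have hzq : z ^ q = z ^ (q - 1) * z := by
    rw [← Real.rpow_add_one (ne_of_gt hzpos)]; congr 1; ring
  have ht_eq : t = z ^ (p - 1) * (1 - (p - 1) * x) := by
    rw [← heq, hzp]
    have : z = 1 + x := by simp [hxdef]
    rw [this]; ring
  have hlhs : q * z ^ (q - 1) - (q - 1) * z ^ q = z ^ (q - 1) * (1 - (q - 1) * x) := by
    rw [hzq]
    have : z = 1 + x := by simp [hxdef]
    rw [this]; ring
  set θ := (q - 1) / (p - 1) with hθdef
  have hθ0 : 0 < θ := div_pos hq0 hp0
  have hθ1 : θ < 1 := (div_lt_one hp0).mpr (by linarith)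
  have hB0 : (0:ℝ) ≤ 1 - (p - 1) * x := by linarith
  have hzp1 : (0:ℝ) < z ^ (q - 1) := Real.rpow_pos_of_pos hzpos _
  -- rewrite RHS
  have hpow : (z ^ (p - 1)) ^ θ = z ^ (q - 1) := by
    rw [← Real.rpow_mul hzpos.le]
    congr 1
    rw [hθdef, mul_comm, div_mul_cancel₀ _ hp0.ne']
  have hrhs : t ^ θ = z ^ (q - 1) * (1 - (p - 1) * x) ^ θ := by
    rw [ht_eq, Real.mul_rpow (Real.rpow_nonneg hzpos.le _) hB0, hpow]
  -- Bernoulli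
  have hbern : (1 - (p - 1) * x) ^ θ < 1 - (q - 1) * x := by
    have h := rpow_one_add_lt_one_add_mul_self (s := -((p - 1) * x))
      (by linarith) (by nlinarith) hθ0 hθ1
    have hθx : θ * ((p - 1) * x) = (q - 1) * x := by
      rw [hθdef, ← mul_assoc, div_mul_cancel₀ _ hp0.ne']
    calc (1 - (p - 1) * x) ^ θ = (1 + -((p - 1) * x)) ^ θ := by ring_nf
      _ < 1 + θ * -((p - 1) * x) := h
      _ = 1 - (q - 1) * x := by rw [mul_neg, hθx]; ring
  rw [gt_iff_lt, hrhs, hlhs]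
  exact (mul_lt_mul_iff_right₀ hzp1).mpr hbern
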